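/- For all integers k ≥ 3, the polynomial r^k − 2·r^{k−1} + 1 factors as (r − 1)·(r^{k−1} − r^{k−2} − ⋯ − r − 1), and the factor r^{k−1} − r^{k−2} − ⋯ − r − 1 has exactly one root of absolute value greater than 1, which is real and simple, while all its other roots have absolute value strictly less than 1. -/

import Mathlib

open Polynomial

/-- The factor r^{k−1} − r^{k−2} − ⋯ − r − 1 over ℂ. -/
noncomputable def Q3 (k : ℕ) : Polynomial ℂ :=
  X ^ (k - 1) - ∑ i ∈ Finset.range (k - 1), X ^ i


open Finset in
lemma stmt3_realAux (m : ℕ) :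
    ∃ α : ℝ, 1 < α ∧ α < 2 ∧ α ^ (m+2) = ∑ i ∈ Finset.range (m+2), α ^ i ∧
      (∀ r : ℝ, 1 < r → r < α → 1 < r^(m+2) * (2 - r)) ∧
      (∀ r : ℝ, α < r → r^(m+2) * (2 - r) < 1) ∧
      2*(m+2) / (m+3) < α := by
  set n : ℕ := m + 2 with hn
  set t : ℝ := 2*(m+2) / (m+3) with htdef
  have ht1 : (1:ℝ) < t := by
    rw [htdef, lt_div_iff₀ (by positivity)]
    push_cast; linarith
  have ht2 : t < 2 := by
    rw [htdef, div_lt_iff₀ (by positivity)]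
    push_cast; linarith
  set h : ℝ → ℝ := fun r => r^n * (2 - r) with hhdef
  have hderiv : ∀ x : ℝ, HasDerivAt h ((n:ℝ) * x^(m+1) * (2 - x) + x^n * (-1)) x := by
    intro x
    have h1 : HasDerivAt (fun y : ℝ => y ^ n) ((n:ℝ) * x^(m+1)) x := by
      have h1' := hasDerivAt_pow n x; rwa [show n - 1 = m + 1 by omega] at h1'
    exact h1.mul ((hasDerivAt_id x).const_sub 2)
  have hderiv' : ∀ x : ℝ, deriv h x = x^(m+1) * (2*(m+2) - (m+3)*x) := by
    intro x
    rw [(hderiv x).deriv]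
    have : x^n = x^(m+1) * x := by rw [hn, pow_succ]
    rw [this, hn]; push_cast; ring
  have hcont : Continuous h := by fun_prop
  have mono : StrictMonoOn h (Set.Icc 1 t) := by
    apply strictMonoOn_of_deriv_pos (convex_Icc _ _) hcont.continuousOn
    intro x hx
    rw [interior_Icc] at hx
    rw [hderiv' x]
    have hx0 : (0:ℝ) < x := lt_trans one_pos hx.1
    have hxt : x < t := hx.2
    have h2 : (m+3:ℝ) * x < 2*(m+2) := by
      rw [htdef, lt_div_iff₀ (by positivity)] at hxt
      linarith [hxt]
    have := pow_pos hx0 (m+1)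
    nlinarith
  have anti : StrictAntiOn h (Set.Icc t 2) := by
    apply strictAntiOn_of_deriv_neg (convex_Icc _ _) hcont.continuousOn
    intro x hx
    rw [interior_Icc] at hx
    rw [hderiv' x]
    have hx0 : (0:ℝ) < x := lt_trans (lt_trans one_pos ht1) hx.1
    have h2 : 2*(m+2:ℝ) < (m+3) * x := by
      have := hx.1
      rw [htdef, div_lt_iff₀ (by positivity)] at this
      linarith [this]
    have := pow_pos hx0 (m+1)
    nlinarith
  set q : ℝ → ℝ := fun r => r^n - ∑ i ∈ Finset.range n, r^i with hqdef
  have key : ∀ r : ℝ, (r - 1) * q r = 1 - h r := by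
    intro r
    have hg := geom_sum_mul r n
    have : r^n = r^(m+1) * r := by rw [hn, pow_succ]
    simp only [hqdef, hhdef]
    linear_combination -hg
  have hqc : Continuous q := by
    apply Continuous.sub (by fun_prop)
    exact continuous_finset_sum _ (fun i _ => by fun_prop)
  have q1 : q 1 = 1 - n := by simp [hqdef]
  have q2 : q 2 = 1 := by
    have hg := geom_sum_mul (2:ℝ) n
    norm_num at hg
    simp only [hqdef]
    rw [hg]; ring
  have h01 : (0:ℝ) ∈ Set.Icc (q 1) (q 2) := by
    constructor
    · rw [q1]; push_cast; linarith [show (n:ℝ) = m + 2 by simp [hn]]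
    · rw [q2]; norm_num
  obtain ⟨α, hαmem, hqα⟩ := intermediate_value_Icc (by norm_num : (1:ℝ) ≤ 2) hqc.continuousOn h01
  have hα1 : 1 < α := by
    rcases lt_or_eq_of_le hαmem.1 with h' | h'
    · exact h'
    · exfalso; rw [← h', q1] at hqα; push_cast at hqα; push_cast at hqα; linarith [show (n:ℝ) = m + 2 by simp [hn]]
  have hα2 : α < 2 := by
    rcases lt_or_eq_of_le hαmem.2 with h' | h'
    · exact h'
    · exfalso; rw [h', q2] at hqα; linarith
  have hhα : h α = 1 := by
    have := key α
    rw [hqα] at this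
    linarith [this]
  have h1e : h 1 = 1 := by simp [hhdef]; norm_num
  have hta : t < α := by
    by_contra h'
    push_neg at h'
    have := mono (Set.mem_Icc.2 ⟨le_refl 1, le_of_lt ht1⟩) (Set.mem_Icc.2 ⟨le_of_lt hα1, h'⟩) hα1
    rw [h1e, hhα] at this
    exact lt_irrefl 1 this
  refine ⟨α, hα1, hα2, by have h' := hqα; simp only [hqdef] at h'; linarith , ?_, ?_, hta⟩
  · intro r hr1 hrα
    rcases le_or_gt r t with h' | h'
    · have := mono (Set.mem_Icc.2 ⟨le_refl 1, le_of_lt ht1⟩) (Set.mem_Icc.2 ⟨le_of_lt hr1, h'⟩) hr1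
      rw [h1e] at this
      exact this
    · have := anti (Set.mem_Icc.2 ⟨le_of_lt h', by linarith⟩)
        (Set.mem_Icc.2 ⟨le_of_lt hta, le_of_lt hα2⟩) hrα
      rw [hhα] at this
      exact this
  · intro r hrα
    rcases le_or_gt r 2 with h' | h'
    · have := anti (Set.mem_Icc.2 ⟨le_of_lt hta, le_of_lt hα2⟩)
        (Set.mem_Icc.2 ⟨by linarith, h'⟩) hrα
      rw [hhα] at this
      exact this
    · have hp : (0:ℝ) < r ^ n := pow_pos (by linarith) n
      nlinarith

set_option maxHeartbeats 1600000 in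
/-- For k ≥ 3, r^k − 2r^{k−1} + 1 = (r − 1)(r^{k−1} − r^{k−2} − ⋯ − r − 1), and the second
factor has exactly one root of absolute value > 1, which is real and simple, while all
its other roots have absolute value < 1. -/
theorem stmt3 (k : ℕ) (hk : 3 ≤ k) :
    (X ^ k - C 2 * X ^ (k - 1) + 1 : Polynomial ℂ) = (X - 1) * Q3 k ∧
    ∃ α : ℝ, 1 < α ∧ (α : ℂ) ∈ (Q3 k).roots ∧ (Q3 k).roots.count (α : ℂ) = 1 ∧
      (∀ z ∈ (Q3 k).roots, 1 < ‖z‖ → z = (α : ℂ)) ∧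
      (∀ z ∈ (Q3 k).roots, z ≠ (α : ℂ) → ‖z‖ < 1) := by
  obtain ⟨m, rfl⟩ : ∃ m, k = m + 3 := ⟨k - 3, by omega⟩
  have e1 : m + 3 - 1 = m + 2 := by omega
  have hQ3 : Q3 (m+3) = X^(m+2) - ∑ i ∈ Finset.range (m+2), X^i := by
    rw [Q3, e1]
  obtain ⟨α, hα1, hα2, hαsum, hineq1, hineq2, hαt⟩ := stmt3_realAux m
  -- factorization
  have hC2 : (C 2 : Polynomial ℂ) = 2 := map_ofNat C 2
  have hfac : (X ^ (m+3) - C 2 * X ^ (m+3-1) + 1 : Polynomial ℂ) = (X - 1) * Q3 (m+3) := by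
    rw [e1, hQ3, hC2]
    have hg := geom_sum_mul (X : Polynomial ℂ) (m+2)
    linear_combination hg
  refine ⟨hfac, α, hα1, ?_⟩
  -- evaluation
  have heval : ∀ z : ℂ, eval z (Q3 (m+3)) = z^(m+2) - ∑ i ∈ Finset.range (m+2), z^i := by
    intro z
    rw [hQ3]
    simp [eval_finset_sum]
  have hQne : Q3 (m+3) ≠ 0 := by
    intro h0
    have h2 : eval 2 (Q3 (m+3)) = 1 := by
      rw [heval]
      have hg := geom_sum_mul (2:ℂ) (m+2)
      linear_combination -hg
    rw [h0] at h2
    simp at h2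
  have hroot_iff : ∀ z : ℂ, z ∈ (Q3 (m+3)).roots ↔
      z^(m+2) = ∑ i ∈ Finset.range (m+2), z^i := by
    intro z
    rw [mem_roots hQne, IsRoot, heval, sub_eq_zero]
  -- α is a root
  have hαroot : (α:ℂ)^(m+2) = ∑ i ∈ Finset.range (m+2), (α:ℂ)^i := by
    exact_mod_cast congrArg (fun x : ℝ => (x : ℂ)) hαsum
  have hαmem : (α:ℂ) ∈ (Q3 (m+3)).roots := (hroot_iff _).mpr hαroot
  -- norm identity for roots
  have habs : ∀ z : ℂ, z^(m+2) = ∑ i ∈ Finset.range (m+2), z^i →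
      ‖z‖^(m+2) * ‖2 - z‖ = 1 := by
    intro z hz
    have hz2 : z^(m+2) * (2 - z) = 1 := by
      have hg := geom_sum_mul z (m+2)
      linear_combination (1 - z) * hz - hg
    have := congrArg (fun w : ℂ => ‖w‖) hz2
    simpa [norm_mul, norm_pow] using this
  have hsumabs : ∀ z : ℂ, ‖∑ i ∈ Finset.range (m+2), z^i‖ ≤
      ∑ i ∈ Finset.range (m+2), ‖z‖^i := by
    intro z
    refine le_trans (norm_sum_le _ _) (le_of_eq (Finset.sum_congr rfl fun i _ => ?_))
    rw [norm_pow]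
  -- A: every root has norm ≤ α
  have hA : ∀ z : ℂ, z^(m+2) = ∑ i ∈ Finset.range (m+2), z^i → ‖z‖ ≤ α := by
    intro z hz
    by_contra h'
    push_neg at h'
    set r : ℝ := ‖z‖ with hrdef
    have h1 : r^(m+2) ≤ ∑ i ∈ Finset.range (m+2), r^i := by
      calc r^(m+2) = ‖z^(m+2)‖ := by rw [norm_pow]
        _ = ‖∑ i ∈ Finset.range (m+2), z^i‖ := by rw [hz]
        _ ≤ ∑ i ∈ Finset.range (m+2), r^i := hsumabs z
    have hr1 : 1 < r := lt_trans hα1 h'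
    have h2 : r^(m+2) * (2 - r) < 1 := hineq2 r h'
    have hg := geom_sum_mul r (m+2)
    have hrel : (r - 1) * (r^(m+2) - ∑ i ∈ Finset.range (m+2), r^i)
        = 1 - r^(m+2)*(2-r) := by linear_combination -hg
    nlinarith [hrel, h1, h2, hr1]
  -- 1 is not a root
  have h1root : ¬ ((1:ℂ)^(m+2) = ∑ i ∈ Finset.range (m+2), (1:ℂ)^i) := by
    intro h
    simp at h
    norm_cast at h
    omega
  -- B: every root with norm ≥ 1 equals α
  have hB : ∀ z : ℂ, z^(m+2) = ∑ i ∈ Finset.range (m+2), z^i → 1 ≤ ‖z‖ → z = (α:ℂ) := by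
    intro z hz hz1
    set r : ℝ := ‖z‖ with hrdef
    have hra : r ≤ α := hA z hz
    have hnz : r^(m+2) * ‖2 - z‖ = 1 := habs z hz
    have h2r : 2 - r ≤ ‖2 - z‖ := by
      have := norm_sub_norm_le (2:ℂ) z
      simpa using this
    -- rule out 1 < r < α
    have hr_not_mid : ¬ (1 < r ∧ r < α) := by
      rintro ⟨ha, hb⟩
      have hkey := hineq1 r ha hb
      have hp : (0:ℝ) < r^(m+2) := pow_pos (by linarith) _
      nlinarith
    -- rule out r = 1
    have hr_ne_one : r ≠ 1 := by
      intro hre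
      rw [hre, one_pow, one_mul] at hnz
      have hn1 : ‖z‖ = 1 := by rw [← hrdef]; exact hre
      have hsq : z.re^2 + z.im^2 = 1 := by
        have h5 : ‖z‖^2 = z.re^2 + z.im^2 := by
          rw [Complex.sq_norm, Complex.normSq_apply]; ring
        rw [hn1] at h5; linarith
      have hsq2 : (2 - z.re)^2 + z.im^2 = 1 := by
        have h5 : ‖2 - z‖^2 = (2 - z.re)^2 + z.im^2 := by
          rw [Complex.sq_norm, Complex.normSq_apply]
          simp [Complex.sub_re, Complex.sub_im]
          ring
        rw [hnz] at h5; linarith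
      have hre1 : z.re = 1 := by nlinarith [hsq, hsq2]
      have him0 : z.im = 0 := by nlinarith [hsq, hre1]
      have : z = 1 := Complex.ext (by simpa using hre1) (by simpa using him0)
      rw [this] at hz
      exact h1root hz
    have hr_eq : r = α := by
      rcases lt_or_eq_of_le hra with h' | h'
      · exfalso
        rcases lt_or_eq_of_le hz1 with h1' | h1'
        · exact hr_not_mid ⟨h1', h'⟩
        · exact hr_ne_one h1'.symm
      · exact h'
    -- equality case: z must be real positive
    have hsplit : ∑ i ∈ Finset.range (m+2), z^i
        = (1 + z) + ∑ i ∈ Finset.Ico 2 (m+2), z^i := by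
      rw [← Finset.sum_range_add_sum_Ico _ (by omega : 2 ≤ m+2)]
      norm_num [Finset.sum_range_succ]
    have hsplitR : ∑ i ∈ Finset.range (m+2), r^i
        = (1 + r) + ∑ i ∈ Finset.Ico 2 (m+2), r^i := by
      rw [← Finset.sum_range_add_sum_Ico _ (by omega : 2 ≤ m+2)]
      norm_num [Finset.sum_range_succ]
    have hIco : ‖∑ i ∈ Finset.Ico 2 (m+2), z^i‖ ≤ ∑ i ∈ Finset.Ico 2 (m+2), r^i := by
      refine le_trans (norm_sum_le _ _) (le_of_eq (Finset.sum_congr rfl fun i _ => ?_))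
      rw [norm_pow]
    have hnorm_sum : ‖∑ i ∈ Finset.range (m+2), z^i‖ = ∑ i ∈ Finset.range (m+2), r^i := by
      calc ‖∑ i ∈ Finset.range (m+2), z^i‖ = ‖z^(m+2)‖ := by rw [hz]
        _ = r^(m+2) := by rw [norm_pow]
        _ = ∑ i ∈ Finset.range (m+2), r^i := by
            rw [hr_eq]; exact_mod_cast hαsum
    have hge : 1 + r ≤ ‖1 + z‖ := by
      have h4 : ‖(1 + z) + ∑ i ∈ Finset.Ico 2 (m+2), z^i‖ ≤
          ‖1 + z‖ + ∑ i ∈ Finset.Ico 2 (m+2), r^i :=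
        le_trans (norm_add_le _ _) (by linarith [hIco])
      rw [← hsplit, hnorm_sum, hsplitR] at h4
      linarith
    have hle : ‖1 + z‖ ≤ 1 + r := by
      have := norm_add_le (1:ℂ) z
      simpa using this
    have heq : ‖(1:ℂ) + z‖ = ‖(1:ℂ)‖ + ‖z‖ := by
      simp only [norm_one]
      linarith [hrdef, hge, hle]
    have hray : SameRay ℝ (1:ℂ) z := sameRay_iff_norm_add.mpr heq
    have hz0 : z ≠ 0 := by
      intro h0
      rw [hrdef, h0, norm_zero] at hz1
      linarith
    have harg : Complex.arg z = 0 := by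
      rcases Complex.sameRay_iff.mp hray with h | h | h
      · exact absurd h one_ne_zero
      · exact absurd h hz0
      · rw [← h, Complex.arg_one]
    obtain ⟨hre0, him0⟩ := Complex.arg_eq_zero_iff.mp harg
    have hresq : z.re^2 = α^2 := by
      have hsq : ‖z‖^2 = z.re^2 + z.im^2 := by
        rw [Complex.sq_norm, Complex.normSq_apply]; ring
      have hna : ‖z‖ = α := by rw [← hrdef]; exact hr_eq
      rw [him0, hna] at hsq
      nlinarith [hsq]
    have hrez : z.re = α := by nlinarith [hresq, hre0, hα1]
    exact Complex.ext (by simpa using hrez) (by simpa using him0)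
  -- count = 1
  have hcount : (Q3 (m+3)).roots.count (α:ℂ) = 1 := by
    rw [Polynomial.count_roots]
    have hge1 : 1 ≤ rootMultiplicity (α:ℂ) (Q3 (m+3)) :=
      (Polynomial.rootMultiplicity_pos hQne).mpr
        (by rw [IsRoot, heval, sub_eq_zero]; exact hαroot)
    have hle1 : rootMultiplicity (α:ℂ) (Q3 (m+3)) ≤ 1 := by
      by_contra hgt
      push_neg at hgt
      set P : Polynomial ℂ := X ^ (m+3) - C 2 * X ^ (m+2) + 1 with hPdef
      have hfac' : P = (X - 1) * Q3 (m+3) := by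
        rw [hPdef, ← e1, hfac]
      have hX1 : (X - 1 : Polynomial ℂ) ≠ 0 := by
        have : (X - 1 : Polynomial ℂ) = X - C 1 := by rw [map_one]
        rw [this]
        exact X_sub_C_ne_zero 1
      have hPne : P ≠ 0 := by
        rw [hfac']
        exact mul_ne_zero hX1 hQne
      have hmulne : (X - 1 : Polynomial ℂ) * Q3 (m+3) ≠ 0 := mul_ne_zero hX1 hQne
      have hmul := Polynomial.rootMultiplicity_mul (x := (α:ℂ)) hmulne
      have hgtP : 1 < rootMultiplicity (α:ℂ) P := by
        rw [hfac', hmul]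
        omega
      have hder := ((Polynomial.one_lt_rootMultiplicity_iff_isRoot hPne).mp hgtP).2
      rw [IsRoot] at hder
      have hdv : eval (α:ℂ) (derivative P) =
          ((m+3 : ℝ) * α^(m+2) - 2*((m+2:ℝ) * α^(m+1)) : ℝ) := by
        rw [hPdef]
        simp [derivative_X_pow]
        ring
      rw [hdv] at hder
      rw [Complex.ofReal_eq_zero] at hder
      have hpos : 0 < (m+3 : ℝ) * α^(m+2) - 2*((m+2:ℝ) * α^(m+1)) := by
        have ht : 2*(m+2:ℝ) < (m+3) * α := by
          rw [div_lt_iff₀ (by positivity)] at hαt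
          linarith
        have hap : (0:ℝ) < α^(m+1) := by positivity
        have : α^(m+2) = α^(m+1) * α := by rw [pow_succ]
        nlinarith
      linarith [hder, hpos]
    omega
  exact ⟨hαmem, hcount,
    fun z hzmem hz1 => hB z ((hroot_iff z).mp hzmem) (le_of_lt hz1),
    fun z hzmem hzne => by
      by_contra h'
      push_neg at h'
      exact hzne (hB z ((hroot_iff z).mp hzmem) h')⟩
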